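/- Let U⁺ be the quotient of the free superalgebra F by the radical R of the bilinear form of Proposition 1.1. If x ∈ U⁺ is homogeneous of nonzero weight ν and ϱ_{i,l}(x) = 0 for all (i,l) ∈ I^∞, then x = 0. -/

import Mathlib

open scoped BigOperators

set_option maxHeartbeats 1000000
set_option synthInstance.maxHeartbeats 400000

noncomputable section

/-- The base field `ℚ(q)`. -/
abbrev K : Type := RatFunc ℚ

/-- The indeterminate `q`. -/
def qq : K := RatFunc.X

/-- Words in the generators `a_{il}`, `(i,l) ∈ I^∞ = I × ℤ_{>0}`. -/
abbrev Word (I : Type) := FreeMonoid (I × ℕ+)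

/-- The parity of a word: the sum of the parities `l·p(i)` of its letters. -/
def wP {I : Type} (p : I → ℕ) (w : Word I) : ℕ :=
  ((FreeMonoid.toList w).map fun a => (a.2 : ℕ) * p a.1).sum

/-- The pairing `(|w|, |w'|)` of the weights of two words, where the letter
`(i,l)` has weight `l·α_i` and `(α_i, α_j) = B i j`. -/
def wB {I : Type} (B : I → I → ℤ) (w w' : Word I) : ℤ :=
  ((FreeMonoid.toList w).map fun a =>
    (((FreeMonoid.toList w').map fun b => (a.2 : ℤ) * (b.2 : ℤ) * B a.1 b.1)).sum).sum

/-- The weight of a word in the root lattice `Q = ⊕ ℤα_i`. -/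
def wWt {I : Type} (w : Word I) : I →₀ ℤ :=
  ((FreeMonoid.toList w).map fun a => Finsupp.single a.1 (a.2 : ℤ)).sum

/-- The free associative `ℚ(q)`-superalgebra `F` on the generators `a_{il}`. -/
abbrev F (I : Type) := MonoidAlgebra K (Word I)

/-- The underlying vector space of `F ⊗ F`, with basis the pairs of words. -/
abbrev M (I : Type) := (Word I × Word I) →₀ K

/-- The basis element of `F` corresponding to a word. -/
def toF {I : Type} (w : Word I) : F I := MonoidAlgebra.single w 1

/-- The generator `a_{il}` of `F`. -/
def gen {I : Type} (i : I) (l : ℕ+) : F I := toF (FreeMonoid.of (i, l))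

/-- The twisted multiplication on `F ⊗ F`:
`(x₁⊗x₂)(x₃⊗x₄) = (-1)^{p(x₂)p(x₃)} q^{(|x₂|,|x₃|)} x₁x₃ ⊗ x₂x₄`. -/
def twmul {I : Type} (p : I → ℕ) (B : I → I → ℤ) (f g : M I) : M I :=
  f.sum fun a ca => g.sum fun b cb =>
    Finsupp.single (a.1 * b.1, a.2 * b.2)
      (ca * cb * (-1 : K) ^ (wP p a.2 * wP p b.1) * qq ^ (wB B a.2 b.1))

/-- Word reversal. -/
def wrev {I : Type} (w : Word I) : Word I :=
  FreeMonoid.ofList (FreeMonoid.toList w).reverse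

/-- The anti-automorphism `σ` of `F` fixing each generator `a_{il}`:
it reverses every word. -/
def sigmaF {I : Type} : F I → F I := fun x => MonoidAlgebra.ofCoeff (Finsupp.mapDomain wrev x.coeff)

/- ### Auxiliary lemmas -/

lemma toF_one {I : Type} : toF (1 : Word I) = 1 := rfl

lemma toF_mul {I : Type} (u v : Word I) : toF (u * v) = toF u * toF v := by
  simp [toF, MonoidAlgebra.single_mul_single]

lemma wP_of {I : Type} (p : I → ℕ) (m : I × ℕ+) :
    wP p (FreeMonoid.of m) = (m.2 : ℕ) * p m.1 := by simp [wP]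

lemma wP_one {I : Type} (p : I → ℕ) : wP p (1 : Word I) = 0 := by simp [wP]

lemma wB_of_of {I : Type} (B : I → I → ℤ) (m m' : I × ℕ+) :
    wB B (FreeMonoid.of m) (FreeMonoid.of m') = (m.2 : ℤ) * (m'.2 : ℤ) * B m.1 m'.1 := by
  simp [wB]

lemma wB_one_right {I : Type} (B : I → I → ℤ) (w : Word I) : wB B w 1 = 0 := by simp [wB]

lemma wWt_nil {I : Type} (w : Word I) (h : FreeMonoid.toList w = []) : wWt w = 0 := by
  simp [wWt, h]

lemma of_ne_one {I : Type} (m : I × ℕ+) : FreeMonoid.of m ≠ (1 : Word I) := by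
  intro h; have := congrArg FreeMonoid.toList h; simp at this

lemma ofList_cons' {I : Type} (b : I × ℕ+) (rest : List (I × ℕ+)) :
    FreeMonoid.ofList (b :: rest) = FreeMonoid.of b * FreeMonoid.ofList rest := rfl

lemma mul_of_eq_of {I : Type} (u : Word I) (m m' : I × ℕ+) :
    u * FreeMonoid.of m = FreeMonoid.of m' ↔ u = 1 ∧ m = m' := by
  constructor
  · intro h
    have h2 := congrArg FreeMonoid.toList h
    rw [FreeMonoid.toList_mul, FreeMonoid.toList_of, FreeMonoid.toList_of] at h2
    cases hu : FreeMonoid.toList u with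
    | nil =>
      rw [hu] at h2; simp at h2
      refine ⟨?_, h2⟩
      have : u = FreeMonoid.ofList (FreeMonoid.toList u) := rfl
      rw [this, hu]; rfl
    | cons c t => rw [hu] at h2; simp at h2
  · rintro ⟨rfl, rfl⟩; simp

lemma of_mul_eq_of {I : Type} (m : I × ℕ+) (v : Word I) (m' : I × ℕ+) :
    FreeMonoid.of m * v = FreeMonoid.of m' ↔ m = m' ∧ v = 1 := by
  constructor
  · intro h
    have h2 := congrArg FreeMonoid.toList h
    rw [FreeMonoid.toList_mul, FreeMonoid.toList_of, FreeMonoid.toList_of] at h2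
    simp only [List.singleton_append, List.cons.injEq] at h2
    refine ⟨h2.1, ?_⟩
    have : v = FreeMonoid.ofList (FreeMonoid.toList v) := rfl
    rw [this, h2.2]; rfl
  · rintro ⟨rfl, rfl⟩; simp

/-- The value `(a_{il}, a_{il}) = (1 - (-1)^{l p(i)} q^{2 l d_i})⁻¹`. -/
def cval {I : Type} (p : I → ℕ) (d : I → ℕ+) (i : I) (l : ℕ+) : K :=
  (1 - (-1 : K) ^ ((l : ℕ) * p i) * qq ^ (2 * (l : ℕ) * (d i : ℕ)))⁻¹

/-- Expansion of a sum over `twmul f (ρ(a_{il}))`. -/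
lemma twmul_sum {I : Type} (p : I → ℕ) (B : I → I → ℤ) (f : M I) (i : I) (l : ℕ+)
    (H : Word I × Word I → K → K) (h0 : ∀ ab, H ab 0 = 0)
    (hadd : ∀ ab c1 c2, H ab (c1 + c2) = H ab c1 + H ab c2) :
    (twmul p B f (Finsupp.single (FreeMonoid.of (i, l), 1) 1 +
        Finsupp.single (1, FreeMonoid.of (i, l)) 1)).sum H =
      f.sum fun a ca =>
        H (a.1 * FreeMonoid.of (i, l), a.2)
            (ca * (-1 : K) ^ (wP p a.2 * wP p (FreeMonoid.of (i, l))) *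
              qq ^ (wB B a.2 (FreeMonoid.of (i, l)))) +
          H (a.1, a.2 * FreeMonoid.of (i, l)) ca := by
  rw [twmul, Finsupp.sum_sum_index h0 hadd]
  refine Finsupp.sum_congr fun a _ => ?_
  rw [Finsupp.sum_add_index' (fun b => by simp) (fun b c1 c2 => by
    rw [← Finsupp.single_add]; congr 1; ring)]
  rw [Finsupp.sum_single_index (by simp), Finsupp.sum_single_index (by simp)]
  rw [Finsupp.sum_add_index' h0 hadd, Finsupp.sum_single_index (h0 _),
    Finsupp.sum_single_index (h0 _)]
  simp only [mul_one, one_mul, wP_one, wB_one_right, Nat.mul_zero, pow_zero, zpow_zero]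

/-- If `x ∈ U⁺ = F/R` is homogeneous of nonzero weight `ν` and `ϱ_{i,l}(x) = 0`
in `U⁺` for all `(i,l) ∈ I^∞`, then `x = 0` in `U⁺`.  Here `R` is the radical of
Lusztig's bilinear form, so membership in `R` is expressed as pairing to zero
with every element of `F`. -/
theorem homogeneous_in_radical {I : Type} [DecidableEq I]
    (p : I → ℕ) (d : I → ℕ+) (B : I → I → ℤ) (hB : ∀ i j, B i j = B j i)
    (rho : F I →ₗ[K] M I)
    (hrho1 : rho 1 = Finsupp.single (1, 1) 1)
    (hrhomul : ∀ x y : F I, rho (x * y) = twmul p B (rho x) (rho y))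
    (hrhogen : ∀ (i : I) (l : ℕ+),
      rho (gen i l) = Finsupp.single (FreeMonoid.of (i, l), 1) 1
        + Finsupp.single (1, FreeMonoid.of (i, l)) 1)
    (Bf : F I →ₗ[K] F I →ₗ[K] K)
    (h11 : Bf 1 1 = 1)
    (hgenB : ∀ (i : I) (l : ℕ+) (j : I) (k : ℕ+),
      Bf (gen i l) (gen j k) =
        if i = j ∧ l = k then
          (1 - (-1 : K) ^ ((l : ℕ) * p i) * qq ^ (2 * (l : ℕ) * (d i : ℕ)))⁻¹
        else 0)
    (hR : ∀ x y y' : F I,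
      Bf x (y * y') = (rho x).sum fun ab c => c * Bf (toF ab.1) y * Bf (toF ab.2) y')
    (hL : ∀ x x' y : F I,
      Bf (x * x') y = (rho y).sum fun ab c => c * Bf x (toF ab.1) * Bf x' (toF ab.2))
    (rlow : I → ℕ+ → (F I →ₗ[K] F I))
    (hl1 : ∀ i l, rlow i l 1 = 0)
    (hlgen : ∀ (i : I) (l : ℕ+) (j : I) (k : ℕ+),
      rlow i l (gen j k) = if i = j ∧ k = l then 1 else 0)
    (hlLeib : ∀ (i : I) (l : ℕ+) (w w' : Word I),
      rlow i l (toF w * toF w') = toF w * rlow i l (toF w') +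
        ((-1 : K) ^ (((l : ℕ) * p i) * wP p w') *
          qq ^ (wB B (FreeMonoid.of (i, l)) w')) • (rlow i l (toF w) * toF w'))
    (ν : I →₀ ℤ) (hν : ν ≠ 0) (x : F I)
    (hhom : ∀ w ∈ (show Word I →₀ K from x.coeff).support, wWt w = ν)
    (hd : ∀ (i : I) (l : ℕ+) (y : F I), Bf (rlow i l x) y = 0) :
    ∀ y : F I, Bf x y = 0 := by
  classical
  -- expansion of a linear functional over the basis of words
  have expand : ∀ (T : F I →ₗ[K] K) (z : F I), T z = z.coeff.sum fun w cw => cw * T (toF w) := by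
    intro T z
    conv_lhs => rw [← MonoidAlgebra.sum_coeff_single z]
    rw [Finsupp.sum, map_sum, Finsupp.sum]
    refine Finset.sum_congr rfl fun w _ => ?_
    have hsingle : MonoidAlgebra.single w (z.coeff w) = (z.coeff w) • toF w := by
      rw [toF, MonoidAlgebra.smul_single' (z.coeff w) w 1, mul_one]
    rw [hsingle, map_smul, smul_eq_mul]
  -- (a_{il}, 1) = 0
  have Bgen1 : ∀ (i : I) (l : ℕ+), Bf (gen i l) 1 = 0 := by
    intro i l
    have h := hR (gen i l) 1 1
    rw [mul_one, hrhogen] at h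
    rw [Finsupp.sum_add_index' (fun ab => by simp) (fun ab c1 c2 => by ring),
      Finsupp.sum_single_index (by simp), Finsupp.sum_single_index (by simp)] at h
    dsimp only at h
    rw [toF_one, h11] at h
    have hg : (toF (FreeMonoid.of (i, l)) : F I) = gen i l := rfl
    rw [hg] at h
    simp only [one_mul, mul_one] at h
    exact (left_eq_add.mp h)
  -- (1, a_{il}) = 0
  have B1gen : ∀ (i : I) (l : ℕ+), Bf 1 (gen i l) = 0 := by
    intro i l
    have h := hL 1 1 (gen i l)
    rw [mul_one, hrhogen] at h
    rw [Finsupp.sum_add_index' (fun ab => by simp) (fun ab c1 c2 => by ring),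
      Finsupp.sum_single_index (by simp), Finsupp.sum_single_index (by simp)] at h
    dsimp only at h
    rw [toF_one, h11] at h
    have hg : (toF (FreeMonoid.of (i, l)) : F I) = gen i l := rfl
    rw [hg] at h
    simp only [one_mul, mul_one] at h
    exact (left_eq_add.mp h)
  -- (1, w) = δ_{w,1}
  have B1 : ∀ u : Word I, Bf 1 (toF u) = if u = 1 then 1 else 0 := by
    intro u
    cases hu : FreeMonoid.toList u with
    | nil =>
      have hu1 : u = 1 := by
        have h' : u = FreeMonoid.ofList (FreeMonoid.toList u) := rfl
        rw [h', hu]; rfl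
      rw [hu1, toF_one, h11, if_pos rfl]
    | cons b rest =>
      have hu1 : u = FreeMonoid.of b * FreeMonoid.ofList rest := by
        have h' : u = FreeMonoid.ofList (FreeMonoid.toList u) := rfl
        rw [h', hu, ofList_cons']
      have hne : u ≠ 1 := by
        intro h; rw [h] at hu; simp at hu
      rw [if_neg hne, hu1, toF_mul]
      have h := hR 1 (toF (FreeMonoid.of b)) (toF (FreeMonoid.ofList rest))
      rw [hrho1, Finsupp.sum_single_index (by simp)] at h
      dsimp only at h
      rw [h, toF_one]
      have hg : (toF (FreeMonoid.of b) : F I) = gen b.1 b.2 := rfl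
      rw [hg, B1gen]
      ring
  -- (a_{jk}, w) = δ_{w, (j,k)} · cval
  have Egen : ∀ (j : I) (k : ℕ+) (u : Word I),
      Bf (gen j k) (toF u) = if u = FreeMonoid.of (j, k) then cval p d j k else 0 := by
    intro j k u
    cases hu : FreeMonoid.toList u with
    | nil =>
      have hu1 : u = 1 := by
        have h' : u = FreeMonoid.ofList (FreeMonoid.toList u) := rfl
        rw [h', hu]; rfl
      rw [hu1, toF_one, Bgen1, if_neg (fun h => of_ne_one (j, k) h.symm)]
    | cons b rest =>
      have hu1 : u = FreeMonoid.of b * FreeMonoid.ofList rest := by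
        have h' : u = FreeMonoid.ofList (FreeMonoid.toList u) := rfl
        rw [h', hu, ofList_cons']
      rw [hu1, toF_mul]
      have h := hR (gen j k) (toF (FreeMonoid.of b)) (toF (FreeMonoid.ofList rest))
      rw [hrhogen] at h
      rw [Finsupp.sum_add_index' (fun ab => by simp) (fun ab c1 c2 => by ring),
        Finsupp.sum_single_index (by simp), Finsupp.sum_single_index (by simp)] at h
      dsimp only at h
      rw [toF_one] at h
      have hb : (toF (FreeMonoid.of b) : F I) = gen b.1 b.2 := rfl
      have hjk : (toF (FreeMonoid.of (j, k)) : F I) = gen j k := rfl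
      rw [hb, hjk] at h
      rw [hb, h, B1gen, hgenB, B1 (FreeMonoid.ofList rest)]
      by_cases hcond : j = b.1 ∧ k = b.2
      · by_cases hrest : FreeMonoid.ofList rest = 1
        · have heq : FreeMonoid.of b * FreeMonoid.ofList rest = FreeMonoid.of (j, k) := by
            rw [hrest, mul_one]
            exact congrArg FreeMonoid.of (Prod.ext hcond.1.symm hcond.2.symm)
          rw [if_pos hcond, if_pos hrest, if_pos heq]
          simp [cval]
        · have hne2 : FreeMonoid.of b * FreeMonoid.ofList rest ≠ FreeMonoid.of (j, k) := by
            intro hcontra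
            exact hrest ((of_mul_eq_of _ _ _).mp hcontra).2
          rw [if_neg hrest, if_neg hne2]
          ring
      · have hne2 : FreeMonoid.of b * FreeMonoid.ofList rest ≠ FreeMonoid.of (j, k) := by
          intro hcontra
          have hb' := ((of_mul_eq_of _ _ _).mp hcontra).1
          exact hcond ⟨(congrArg Prod.fst hb').symm, (congrArg Prod.snd hb').symm⟩
        rw [if_neg hcond, if_neg hne2]
        ring
  -- (z, y) via ρ(y) and the δ at the second component
  have Fexp : ∀ (Z y : F I), Bf Z y = (rho y).sum fun b cb =>
      cb * Bf Z (toF b.1) * (if b.2 = (1 : Word I) then (1 : K) else 0) := by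
    intro Z y
    have h := hL Z 1 y
    rw [mul_one] at h
    rw [h]
    refine Finsupp.sum_congr fun b _ => ?_
    rw [B1 b.2]
  -- the key expansion of (X·Y, y·a_{il})
  have key : ∀ (i : I) (l : ℕ+) (X Y y : F I),
      Bf (X * Y) (y * gen i l) =
        (rho y).sum fun b cb => cb *
          ((-1 : K) ^ (wP p b.2 * wP p (FreeMonoid.of (i, l))) *
              qq ^ (wB B b.2 (FreeMonoid.of (i, l))) *
              Bf X (toF (b.1 * FreeMonoid.of (i, l))) * Bf Y (toF b.2) +
            Bf X (toF b.1) * Bf Y (toF (b.2 * FreeMonoid.of (i, l)))) := by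
    intro i l X Y y
    rw [hL, hrhomul, hrhogen]
    rw [twmul_sum p B (rho y) i l (fun ab c => c * Bf X (toF ab.1) * Bf Y (toF ab.2))
      (fun ab => by simp) (fun ab c1 c2 => by ring)]
    refine Finsupp.sum_congr fun b _ => ?_
    dsimp only
    ring
  -- the adjunction on basis words
  have Aword : ∀ (L : List (I × ℕ+)) (i : I) (l : ℕ+) (y : F I),
      Bf (toF (FreeMonoid.ofList L)) (y * gen i l)
        = cval p d i l * Bf (rlow i l (toF (FreeMonoid.ofList L))) y := by
    intro L
    induction L using List.reverseRecOn with
    | nil =>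
      intro i l y
      have h0 : FreeMonoid.ofList ([] : List (I × ℕ+)) = 1 := rfl
      rw [h0, toF_one, hl1]
      have h1 := hR 1 y (gen i l)
      rw [hrho1, Finsupp.sum_single_index (by simp)] at h1
      dsimp only at h1
      rw [h1, toF_one, B1gen]
      simp
    | append_singleton L a ih =>
      intro i l y
      have hofl : FreeMonoid.ofList (L ++ [a]) = FreeMonoid.ofList L * FreeMonoid.of a := by
        rw [FreeMonoid.ofList_append]; rfl
      rw [hofl, toF_mul]
      rw [key i l (toF (FreeMonoid.ofList L)) (toF (FreeMonoid.of a)) y]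
      rw [hlLeib i l (FreeMonoid.ofList L) (FreeMonoid.of a)]
      have hga : rlow i l (toF (FreeMonoid.of a)) = if i = a.1 ∧ a.2 = l then 1 else 0 := by
        have hg : (toF (FreeMonoid.of a) : F I) = gen a.1 a.2 := rfl
        rw [hg, hlgen]
      rw [hga]
      rw [map_add, LinearMap.add_apply, map_smul, LinearMap.smul_apply, smul_eq_mul]
      rw [hL (rlow i l (toF (FreeMonoid.ofList L))) (toF (FreeMonoid.of a)) y]
      have hsplit : Bf (toF (FreeMonoid.ofList L) * (if i = a.1 ∧ a.2 = l then (1 : F I) else 0)) y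
          = if i = a.1 ∧ a.2 = l then Bf (toF (FreeMonoid.ofList L)) y else 0 := by
        split_ifs <;> simp
      rw [hsplit]
      rw [Fexp (toF (FreeMonoid.ofList L)) y]
      have hite : (if i = a.1 ∧ a.2 = l then
            ((rho y).sum fun b cb => cb * Bf (toF (FreeMonoid.ofList L)) (toF b.1) *
              (if b.2 = (1 : Word I) then (1 : K) else 0)) else 0)
          = (rho y).sum fun b cb => (if i = a.1 ∧ a.2 = l then
              cb * Bf (toF (FreeMonoid.ofList L)) (toF b.1) *
                (if b.2 = (1 : Word I) then (1 : K) else 0) else 0) := by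
        split_ifs with hc
        · rfl
        · rw [Finsupp.sum, Finset.sum_const_zero]
      rw [mul_add, hite, Finsupp.mul_sum, ← mul_assoc, Finsupp.mul_sum, ← Finsupp.sum_add]
      refine Finsupp.sum_congr fun b _ => ?_
      -- pointwise identity
      have hQ : cval p d i l * Bf (rlow i l (toF (FreeMonoid.ofList L))) (toF b.1)
          = Bf (toF (FreeMonoid.ofList L)) (toF (b.1 * FreeMonoid.of (i, l))) := by
        rw [toF_mul]
        exact (ih i l (toF b.1)).symm
      have hYa : ∀ u : Word I, Bf (toF (FreeMonoid.of a)) (toF u)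
          = if u = FreeMonoid.of a then cval p d a.1 a.2 else 0 := fun u => Egen a.1 a.2 u
      have ht : (-1 : K) ^ (wP p (FreeMonoid.of a) * wP p (FreeMonoid.of (i, l))) *
            qq ^ (wB B (FreeMonoid.of a) (FreeMonoid.of (i, l)))
          = (-1 : K) ^ (((l : ℕ) * p i) * wP p (FreeMonoid.of a)) *
            qq ^ (wB B (FreeMonoid.of (i, l)) (FreeMonoid.of a)) := by
        rw [wP_of, wP_of, wB_of_of, wB_of_of, hB a.1 i]
        congr 1
        · rw [Nat.mul_comm]
        · congr 1
          ring
      by_cases h2 : b.2 = FreeMonoid.of a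
      · have h3 : b.2 * FreeMonoid.of (i, l) ≠ FreeMonoid.of a := by
          rw [h2]
          intro hcontra
          exact of_ne_one a ((mul_of_eq_of _ _ _).mp hcontra).1
        have h4 : b.2 ≠ (1 : Word I) := by rw [h2]; exact of_ne_one a
        rw [hYa b.2, hYa (b.2 * FreeMonoid.of (i, l)), if_pos h2, if_neg h3, if_neg h4]
        rw [h2, ht, ← hQ]
        simp only [mul_zero, ite_self]
        ring
      · rw [hYa b.2, if_neg h2, hYa (b.2 * FreeMonoid.of (i, l))]
        by_cases h3 : b.2 * FreeMonoid.of (i, l) = FreeMonoid.of a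
        · obtain ⟨hb21, hma⟩ := (mul_of_eq_of _ _ _).mp h3
          have hcond : i = a.1 ∧ a.2 = l := by
            rw [← hma]; exact ⟨rfl, rfl⟩
          have hcv : cval p d a.1 a.2 = cval p d i l := by rw [← hma]
          rw [if_pos h3, if_pos hcond, if_pos hb21, hcv]
          ring
        · rw [if_neg h3]
          by_cases hcond : i = a.1 ∧ a.2 = l
          · have hb2 : b.2 ≠ (1 : Word I) := by
              intro hb2
              apply h3
              rw [hb2, one_mul]
              have ha' : a = (i, l) := Prod.ext hcond.1.symm hcond.2
              rw [ha']
            rw [if_pos hcond, if_neg hb2]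
            ring
          · rw [if_neg hcond]
            ring
  -- the adjunction for arbitrary elements
  have A : ∀ (z y : F I) (i : I) (l : ℕ+),
      Bf z (y * gen i l) = cval p d i l * Bf (rlow i l z) y := by
    intro z y i l
    have h1 := expand (Bf.flip (y * gen i l)) z
    have h2 := expand ((Bf.flip y).comp (rlow i l)) z
    simp only [LinearMap.flip_apply, LinearMap.comp_apply] at h1 h2
    rw [h1, h2, Finsupp.mul_sum]
    refine Finsupp.sum_congr fun w _ => ?_
    have h3 := Aword (FreeMonoid.toList w) i l y
    have h4 : FreeMonoid.ofList (FreeMonoid.toList w) = w := rfl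
    rw [h4] at h3
    rw [h3]
    ring
  -- conclusion
  intro y
  have mw : ∀ w : Word I, Bf x (toF w) = 0 := by
    intro w
    rcases List.eq_nil_or_concat (FreeMonoid.toList w) with h | ⟨L, a, h⟩
    all_goals (try rw [List.concat_eq_append] at h)
    · have hw : w = 1 := by
        have h' : w = FreeMonoid.ofList (FreeMonoid.toList w) := rfl
        rw [h', h]; rfl
      rw [hw, toF_one]
      have h1 := expand (Bf.flip (1 : F I)) x
      simp only [LinearMap.flip_apply] at h1
      rw [h1, Finsupp.sum]
      refine Finset.sum_eq_zero fun u hu => ?_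
      have hwt := hhom u hu
      have hune : FreeMonoid.toList u ≠ [] := by
        intro hnil; rw [wWt_nil u hnil] at hwt; exact hν hwt.symm
      obtain ⟨b, rest, hbr⟩ : ∃ b rest, FreeMonoid.toList u = b :: rest := by
        cases h' : FreeMonoid.toList u with
        | nil => exact absurd h' hune
        | cons b rest => exact ⟨b, rest, rfl⟩
      have hu1 : u = FreeMonoid.of b * FreeMonoid.ofList rest := by
        have h' : u = FreeMonoid.ofList (FreeMonoid.toList u) := rfl
        rw [h', hbr, ofList_cons']
      rw [hu1, toF_mul]
      have h2 := hL (toF (FreeMonoid.of b)) (toF (FreeMonoid.ofList rest)) (1 : F I)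
      rw [hrho1, Finsupp.sum_single_index (by simp)] at h2
      dsimp only at h2
      rw [h2, toF_one]
      have hg : (toF (FreeMonoid.of b) : F I) = gen b.1 b.2 := rfl
      rw [hg, Bgen1]
      ring
    · have hw : w = FreeMonoid.ofList L * FreeMonoid.of a := by
        have h' : w = FreeMonoid.ofList (FreeMonoid.toList w) := rfl
        rw [h', h, FreeMonoid.ofList_append]; rfl
      rw [hw, toF_mul]
      have hg : (toF (FreeMonoid.of a) : F I) = gen a.1 a.2 := rfl
      rw [hg, A x (toF (FreeMonoid.ofList L)) a.1 a.2, hd a.1 a.2, mul_zero]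
  have h1 := expand (Bf x) y
  rw [h1, Finsupp.sum]
  exact Finset.sum_eq_zero fun w _ => by rw [mw w, mul_zero]
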